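/- Let ρ be a d×d complex positive semidefinite matrix with trace 1, let P be a d×d Hermitian projection (P = Pᴴ and P² = P), let v ∈ ℂ^d be a unit vector, and let ε ∈ [0,1]. If tr(Pρ) ≥ 1 - ε, then ‖P ρ P + (1 - tr(Pρ)) v vᴴ - ρ‖₁ ≤ 2√ε + ε, where ‖A‖₁ = tr√(AᴴA) denotes the trace norm. In particular, if ε = 2^{-L} then the bound is at most 2^{2 - L/2}. -/

import Mathlib

open scoped ComplexOrder
open Matrix

/-- The trace norm of a square complex matrix: `‖A‖₁ = tr √(Aᴴ A)`. -/
noncomputable def traceNorm {d : ℕ} (A : Matrix (Fin d) (Fin d) ℂ) : ℝ :=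
  (let hA := (Matrix.posSemidef_conjTranspose_mul_self A).1;
    (hA.eigenvectorUnitary.1 * Matrix.diagonal ((fun x : ℝ => (x : ℂ)) ∘ (√·) ∘ hA.eigenvalues) *
      (star hA.eigenvectorUnitary : Matrix (Fin d) (Fin d) ℂ))).trace.re

variable {d : ℕ}

lemma my_spec_nonneg (S : Matrix (Fin d) (Fin d) ℂ) (hS : S.PosSemidef) :
    ∀ x ∈ spectrum ℝ S, 0 ≤ x := by
  intro x hx
  rw [hS.1.spectrum_real_eq_range_eigenvalues] at hx
  obtain ⟨i, rfl⟩ := hx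
  exact hS.eigenvalues_nonneg i

lemma my_psd_sqrt (ρ : Matrix (Fin d) (Fin d) ℂ) (hρ : ρ.PosSemidef) :
    ∃ R : Matrix (Fin d) (Fin d) ℂ, Rᴴ = R ∧ R * R = ρ := by
  have hsa : IsSelfAdjoint ρ := hρ.1
  refine ⟨cfc Real.sqrt ρ, (cfc_predicate Real.sqrt ρ : IsSelfAdjoint _), ?_⟩
  rw [← cfc_mul Real.sqrt Real.sqrt ρ]
  conv_rhs => rw [← cfc_id' ℝ ρ]
  exact cfc_congr fun x hx => Real.mul_self_sqrt (my_spec_nonneg ρ hρ x hx)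

lemma my_traceNorm_eq (A S : Matrix (Fin d) (Fin d) ℂ) (hS : S.PosSemidef)
    (hSS : S ^ 2 = Aᴴ * A) : traceNorm A = S.trace.re := by
  have hA := (Matrix.posSemidef_conjTranspose_mul_self A).1
  have hsa : IsSelfAdjoint S := hS.1
  have h1 : (hA.eigenvectorUnitary.1 *
      Matrix.diagonal ((fun x : ℝ => (x : ℂ)) ∘ (√·) ∘ hA.eigenvalues) *
      (star hA.eigenvectorUnitary : Matrix (Fin d) (Fin d) ℂ)) = cfc Real.sqrt (Aᴴ * A) := by
    rw [hA.cfc_eq, Matrix.IsHermitian.cfc, Unitary.conjStarAlgAut_apply]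
    rfl
  have h2 : cfc Real.sqrt (Aᴴ * A) = S := by
    rw [← hSS, sq]
    have h3 : S * S = cfc (fun x : ℝ => x * x) S := by
      rw [cfc_mul (fun x : ℝ => x) (fun x : ℝ => x) S, cfc_id' ℝ S]
    rw [h3, ← cfc_comp Real.sqrt (fun x : ℝ => x * x) S]
    conv_rhs => rw [← cfc_id' ℝ S]
    exact cfc_congr fun x hx => Real.sqrt_mul_self (my_spec_nonneg S hS x hx)
  unfold traceNorm
  simp only []
  rw [h1, h2]

lemma my_trace_cmul (X Y : Matrix (Fin d) (Fin d) ℂ) :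
    Matrix.trace (Xᴴ * Y) = ∑ j, ∑ i, (starRingEnd ℂ) (X i j) * Y i j := by
  simp [Matrix.trace, Matrix.diag, Matrix.mul_apply, Matrix.conjTranspose_apply]

lemma my_re_trace_sq (X : Matrix (Fin d) (Fin d) ℂ) :
    (Matrix.trace (Xᴴ * X)).re = ∑ j, ∑ i, ‖X i j‖ ^ 2 := by
  rw [my_trace_cmul]
  rw [Complex.re_sum]
  refine Finset.sum_congr rfl fun j _ => ?_
  rw [Complex.re_sum]
  refine Finset.sum_congr rfl fun i _ => ?_
  rw [← Complex.normSq_eq_conj_mul_self]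
  rw [Complex.ofReal_re, Complex.normSq_eq_norm_sq]

lemma my_cs {ι : Type*} [Fintype ι] (f g : ι → ℝ) (hf : ∀ i, 0 ≤ f i) (hg : ∀ i, 0 ≤ g i) :
    ∑ i, f i * g i ≤ Real.sqrt (∑ i, f i ^ 2) * Real.sqrt (∑ i, g i ^ 2) := by
  have h := Finset.sum_mul_sq_le_sq_mul_sq Finset.univ f g
  have h0 : 0 ≤ ∑ i, f i * g i :=
    Finset.sum_nonneg fun i _ => mul_nonneg (hf i) (hg i)
  calc ∑ i, f i * g i = Real.sqrt ((∑ i, f i * g i) ^ 2) := (Real.sqrt_sq h0).symm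
    _ ≤ Real.sqrt ((∑ i, f i ^ 2) * ∑ i, g i ^ 2) := Real.sqrt_le_sqrt h
    _ = _ := Real.sqrt_mul (Finset.sum_nonneg fun i _ => sq_nonneg _) _

lemma my_abs_trace_le (X Y : Matrix (Fin d) (Fin d) ℂ) :
    ‖Matrix.trace (Xᴴ * Y)‖ ≤
      Real.sqrt (Matrix.trace (Xᴴ * X)).re * Real.sqrt (Matrix.trace (Yᴴ * Y)).re := by
  rw [my_trace_cmul, my_re_trace_sq, my_re_trace_sq]
  rw [show (∑ j, ∑ i, (starRingEnd ℂ) (X i j) * Y i j)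
      = ∑ p : Fin d × Fin d, (starRingEnd ℂ) (X p.2 p.1) * Y p.2 p.1 from
      (Fintype.sum_prod_type (fun p => (starRingEnd ℂ) (X p.2 p.1) * Y p.2 p.1)).symm,
    show (∑ j, ∑ i, ‖X i j‖ ^ 2) = ∑ p : Fin d × Fin d, ‖X p.2 p.1‖ ^ 2 from
      (Fintype.sum_prod_type (fun p : Fin d × Fin d => ‖X p.2 p.1‖ ^ 2)).symm,
    show (∑ j, ∑ i, ‖Y i j‖ ^ 2) = ∑ p : Fin d × Fin d, ‖Y p.2 p.1‖ ^ 2 from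
      (Fintype.sum_prod_type (fun p : Fin d × Fin d => ‖Y p.2 p.1‖ ^ 2)).symm]
  calc ‖∑ p : Fin d × Fin d, (starRingEnd ℂ) (X p.2 p.1) * Y p.2 p.1‖
      ≤ ∑ p : Fin d × Fin d, ‖X p.2 p.1‖ * ‖Y p.2 p.1‖ := by
        refine (norm_sum_le _ _).trans (le_of_eq ?_)
        refine Finset.sum_congr rfl fun p _ => ?_
        rw [norm_mul, RCLike.norm_conj]
    _ ≤ _ := my_cs _ _ (fun p => norm_nonneg _) (fun p => norm_nonneg _)

lemma my_sign_exists (D : Matrix (Fin d) (Fin d) ℂ) (hD : D.IsHermitian) :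
    ∃ C : Matrix (Fin d) (Fin d) ℂ, Cᴴ = C ∧ C * C = 1 ∧
      traceNorm D = (Matrix.trace (C * D)).re := by
  set U : Matrix (Fin d) (Fin d) ℂ :=
    (Matrix.IsHermitian.eigenvectorUnitary hD : Matrix (Fin d) (Fin d) ℂ) with hUdef
  have hU1 : U * Uᴴ = 1 := by
    rw [← star_eq_conjTranspose]
    exact Matrix.mem_unitaryGroup_iff.mp (Matrix.IsHermitian.eigenvectorUnitary hD).2
  have hU2 : Uᴴ * U = 1 := by
    rw [← star_eq_conjTranspose]
    exact Matrix.mem_unitaryGroup_iff'.mp (Matrix.IsHermitian.eigenvectorUnitary hD).2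
  have key : ∀ f1 f2 : Fin d → ℂ,
      (U * Matrix.diagonal f1 * Uᴴ) * (U * Matrix.diagonal f2 * Uᴴ)
        = U * Matrix.diagonal (fun i => f1 i * f2 i) * Uᴴ := by
    intro f1 f2
    calc (U * Matrix.diagonal f1 * Uᴴ) * (U * Matrix.diagonal f2 * Uᴴ)
        = U * Matrix.diagonal f1 * (Uᴴ * U) * Matrix.diagonal f2 * Uᴴ := by
          simp only [mul_assoc]
      _ = U * (Matrix.diagonal f1 * Matrix.diagonal f2) * Uᴴ := by
          rw [hU2, mul_one]; simp only [mul_assoc]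
      _ = U * Matrix.diagonal (fun i => f1 i * f2 i) * Uᴴ := by
          rw [Matrix.diagonal_mul_diagonal]
  set g : Fin d → ℂ := fun i => ((if hD.eigenvalues i < 0 then (-1:ℝ) else 1 : ℝ) : ℂ) with hgdef
  refine ⟨U * Matrix.diagonal g * Uᴴ, ?_, ?_, ?_⟩
  · have hg : star g = g := by
      funext i
      simp [hgdef, Pi.star_apply, Complex.conj_ofReal]
    simp only [conjTranspose_mul, conjTranspose_conjTranspose, diagonal_conjTranspose, hg,
      mul_assoc]
  · rw [key]
    have : (fun i => g i * g i) = fun _ => (1 : ℂ) := by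
      funext i
      simp only [hgdef]
      split_ifs <;> norm_num
    rw [this, Matrix.diagonal_one, mul_one, hU1]
  · have hspec : D = U * Matrix.diagonal (RCLike.ofReal ∘ hD.eigenvalues) * Uᴴ := by
      simpa [star_eq_conjTranspose] using hD.spectral_theorem
    set S := U * Matrix.diagonal (fun i => ((|hD.eigenvalues i| : ℝ) : ℂ)) * Uᴴ with hSdef
    have habs : ∀ i, g i * ((hD.eigenvalues i : ℝ) : ℂ) = ((|hD.eigenvalues i| : ℝ) : ℂ) := by
      intro i
      simp only [hgdef]
      split_ifs with hneg
      · rw [abs_of_neg hneg]; push_cast; ring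
      · rw [abs_of_nonneg (not_lt.mp hneg)]; push_cast; ring
    have hCD : (U * Matrix.diagonal g * Uᴴ) * D = S := by
      conv_lhs => rw [hspec]
      rw [key]
      have : (fun i => g i * (RCLike.ofReal ∘ hD.eigenvalues) i)
          = fun i => ((|hD.eigenvalues i| : ℝ) : ℂ) := funext fun i => habs i
      rw [this]
    have hS : S.PosSemidef := by
      apply Matrix.PosSemidef.mul_mul_conjTranspose_same (B := U)
      refine Matrix.posSemidef_diagonal_iff.mpr fun i => ?_
      exact_mod_cast Complex.zero_le_real.mpr (abs_nonneg _)
    have hSS : S ^ 2 = Dᴴ * D := by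
      rw [hD.eq, sq, hSdef, key]
      conv_rhs => rw [hspec]
      rw [key]
      have : (fun i => ((|hD.eigenvalues i| : ℝ) : ℂ) * ((|hD.eigenvalues i| : ℝ) : ℂ))
          = fun i => (RCLike.ofReal ∘ hD.eigenvalues) i * (RCLike.ofReal ∘ hD.eigenvalues) i := by
        funext i
        simp only [Function.comp_apply]
        rw [← Complex.ofReal_mul, abs_mul_abs_self]
        norm_cast
      rw [this]
    rw [my_traceNorm_eq D S hS hSS, hCD]


set_option maxHeartbeats 2000000 in
/-- Trace-norm bound for the truncation channel `𝒯(ρ) = PρP + (1 - tr(Pρ)) v vᴴ`: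
if `ρ` is a density matrix, `P` a Hermitian projection, `v` a unit vector, `ε ∈ [0,1]` and
`tr(Pρ) ≥ 1 - ε`, then `‖𝒯(ρ) - ρ‖₁ ≤ 2√ε + ε`; in particular, for `ε = 2^{-L}` the bound
is at most `2^{2 - L/2}`. -/
theorem truncation_channel_bound {d : ℕ} (ρ P : Matrix (Fin d) (Fin d) ℂ)
    (v : Fin d → ℂ)
    (hρ : ρ.PosSemidef) (hρtr : ρ.trace = 1)
    (hP : P.IsHermitian) (hP2 : P * P = P)
    (hv : ∑ i, ‖v i‖ ^ 2 = 1)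
    (ε : ℝ) (hε0 : 0 ≤ ε) (hε1 : ε ≤ 1) (h : 1 - ε ≤ (Matrix.trace (P * ρ)).re) :
    traceNorm (P * ρ * P + (1 - Matrix.trace (P * ρ)) • Matrix.vecMulVec v (star v) - ρ)
      ≤ 2 * Real.sqrt ε + ε ∧
    ∀ L : ℕ, ε = (2 : ℝ) ^ (-(L : ℝ)) →
      2 * Real.sqrt ε + ε ≤ (2 : ℝ) ^ (2 - (L : ℝ) / 2) := by
  constructor
  · -- main bound
    have hρh : ρᴴ = ρ := hρ.1
    obtain ⟨R, hRh, hRR⟩ : ∃ R : Matrix (Fin d) (Fin d) ℂ, Rᴴ = R ∧ R * R = ρ :=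
      my_psd_sqrt ρ hρ
    set Q : Matrix (Fin d) (Fin d) ℂ := 1 - P with hQdef
    have hQh : Qᴴ = Q := by
      simp [hQdef, conjTranspose_sub, hP.eq]
    have hQ2 : Q * Q = Q := by
      simp only [hQdef, sub_mul, mul_sub, one_mul, mul_one, hP2]
      abel
    set w : Matrix (Fin d) (Fin d) ℂ := Matrix.vecMulVec v (star v) with hwdef
    have hwh : wᴴ = w := by
      ext i j
      simp [hwdef, conjTranspose_apply, vecMulVec_apply, mul_comm]
    have hv' : ∑ k, (starRingEnd ℂ) (v k) * v k = 1 := by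
      have : ∀ k, (starRingEnd ℂ) (v k) * v k = ((‖v k‖ ^ 2 : ℝ) : ℂ) := by
        intro k
        rw [← Complex.normSq_eq_conj_mul_self]
        congr 1
        rw [Complex.normSq_eq_norm_sq]
      simp_rw [this]
      rw [← Complex.ofReal_sum, hv, Complex.ofReal_one]
    have hww : w * w = w := by
      ext i j
      simp only [hwdef, Matrix.mul_apply, vecMulVec_apply, Pi.star_apply, Complex.star_def]
      have : ∀ k, v i * (starRingEnd ℂ) (v k) * (v k * (starRingEnd ℂ) (v j))
          = ((starRingEnd ℂ) (v k) * v k) * (v i * (starRingEnd ℂ) (v j)) := fun k => by ring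
      simp_rw [this, ← Finset.sum_mul, hv', one_mul]
    have htrw : Matrix.trace w = 1 := by
      simp only [hwdef, Matrix.trace, Matrix.diag, vecMulVec_apply, Pi.star_apply,
        Complex.star_def]
      rw [← hv']
      exact Finset.sum_congr rfl fun k _ => by ring
    set t : ℝ := (Matrix.trace (P * ρ)).re with htdef
    have htPρ : Matrix.trace (P * ρ) = (t : ℂ) := by
      have hconj : (starRingEnd ℂ) (Matrix.trace (P * ρ)) = Matrix.trace (P * ρ) := by
        calc (starRingEnd ℂ) (Matrix.trace (P * ρ)) = Matrix.trace ((P * ρ)ᴴ) := by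
              rw [Matrix.trace_conjTranspose]; rfl
          _ = Matrix.trace (ρ * P) := by rw [conjTranspose_mul, hρh, hP.eq]
          _ = Matrix.trace (P * ρ) := Matrix.trace_mul_comm ρ P
      exact (Complex.conj_eq_iff_re.mp hconj).symm
    have hQρtr : Matrix.trace (Q * ρ) = ((1 - t : ℝ) : ℂ) := by
      rw [hQdef, sub_mul, one_mul, Matrix.trace_sub, hρtr, htPρ]
      push_cast
      ring
    have hQρ0 : 0 ≤ 1 - t := by
      have hform : (R * Q)ᴴ * (R * Q) = Q * (ρ * Q) := by
        rw [conjTranspose_mul, hQh, hRh]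
        calc Q * R * (R * Q) = Q * (R * R) * Q := by simp only [mul_assoc]
          _ = Q * (ρ * Q) := by rw [hRR, mul_assoc]
      have h1 : Matrix.trace ((R * Q)ᴴ * (R * Q)) = ((1 - t : ℝ) : ℂ) := by
        rw [hform, ← mul_assoc, Matrix.trace_mul_cycle, hQ2, hQρtr]
      have h2 := my_re_trace_sq (R * Q)
      have h3 : 0 ≤ (Matrix.trace ((R * Q)ᴴ * (R * Q))).re := by
        rw [h2]
        exact Finset.sum_nonneg fun j _ => Finset.sum_nonneg fun i _ => sq_nonneg _
      rw [h1] at h3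
      simpa using h3
    have het : 1 - t ≤ ε := by
      simp only [htdef]
      linarith [h]
    have hc : (1 : ℂ) - Matrix.trace (P * ρ) = ((1 - t : ℝ) : ℂ) := by
      rw [htPρ]; push_cast; ring
    rw [hc]
    set D : Matrix (Fin d) (Fin d) ℂ := P * ρ * P + ((1 - t : ℝ) : ℂ) • w - ρ with hDdef
    have hDh : D.IsHermitian := by
      show Dᴴ = D
      simp only [hDdef, conjTranspose_sub, conjTranspose_add, conjTranspose_smul,
        conjTranspose_mul, hwh, hρh, hP.eq, Complex.star_def, Complex.conj_ofReal, mul_assoc]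
    obtain ⟨C, hCh, hCC, hTN⟩ := my_sign_exists D hDh
    have cyc : ∀ M : Matrix (Fin d) (Fin d) ℂ,
        Matrix.trace (C * M * C) = Matrix.trace M := by
      intro M
      rw [Matrix.trace_mul_cycle, hCC, one_mul]
    have hdec : D = ((1 - t : ℝ) : ℂ) • w - Q * ρ - P * ρ * Q := by
      simp only [hDdef, hQdef, sub_mul, mul_sub, one_mul, mul_one]
      abel
    have htrace : Matrix.trace (C * D)
        = ((1 - t : ℝ) : ℂ) * Matrix.trace (C * w)
          - Matrix.trace (C * (Q * ρ)) - Matrix.trace (C * (P * ρ * Q)) := by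
      rw [hdec]
      simp only [mul_sub, Matrix.mul_smul, Matrix.trace_sub, Matrix.trace_smul, smul_eq_mul]
    -- Term 1
    have e1 : Matrix.trace ((w * C)ᴴ * (w * C)) = 1 := by
      rw [conjTranspose_mul, hCh, hwh]
      rw [show C * w * (w * C) = C * (w * w) * C from by simp only [mul_assoc], hww, cyc, htrw]
    have e2 : Matrix.trace (wᴴ * w) = 1 := by rw [hwh, hww, htrw]
    have h1form : C * w = (w * C)ᴴ * w := by
      rw [conjTranspose_mul, hCh, hwh, mul_assoc, hww]
    have hT1 : ‖Matrix.trace (C * w)‖ ≤ 1 := by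
      have := my_abs_trace_le (w * C) w
      rw [← h1form, e1, e2] at this
      simpa using this
    -- Term 2
    have h2form : C * (Q * ρ) = (R * Q * C)ᴴ * R := by
      rw [conjTranspose_mul, conjTranspose_mul, hCh, hQh, hRh, ← hRR]
      simp only [mul_assoc]
    have e3 : Matrix.trace ((R * Q * C)ᴴ * (R * Q * C)) = ((1 - t : ℝ) : ℂ) := by
      rw [conjTranspose_mul, conjTranspose_mul, hCh, hQh, hRh]
      rw [show C * (Q * R) * (R * Q * C) = C * (Q * (R * R) * Q) * C from by
        simp only [mul_assoc], hRR, cyc]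
      rw [Matrix.trace_mul_cycle, hQ2, hQρtr]
    have e4 : Matrix.trace (Rᴴ * R) = 1 := by rw [hRh, hRR, hρtr]
    have hT2 : ‖Matrix.trace (C * (Q * ρ))‖ ≤ Real.sqrt ε := by
      have := my_abs_trace_le (R * Q * C) R
      rw [← h2form, e3, e4] at this
      simp only [Complex.ofReal_re, Complex.one_re, Real.sqrt_one, mul_one] at this
      exact this.trans (Real.sqrt_le_sqrt het)
    -- Term 3
    have h3form : C * (P * ρ * Q) = (R * P * C)ᴴ * (R * Q) := by
      rw [conjTranspose_mul, conjTranspose_mul, hCh, hP.eq, hRh, ← hRR]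
      simp only [mul_assoc]
    have e5 : Matrix.trace ((R * P * C)ᴴ * (R * P * C)) = (t : ℂ) := by
      rw [conjTranspose_mul, conjTranspose_mul, hCh, hP.eq, hRh]
      rw [show C * (P * R) * (R * P * C) = C * (P * (R * R) * P) * C from by
        simp only [mul_assoc], hRR, cyc]
      rw [Matrix.trace_mul_cycle, hP2, htPρ]
    have e6 : Matrix.trace ((R * Q)ᴴ * (R * Q)) = ((1 - t : ℝ) : ℂ) := by
      rw [conjTranspose_mul, hQh, hRh]
      rw [show Q * R * (R * Q) = Q * (R * R) * Q from by simp only [mul_assoc], hRR]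
      rw [Matrix.trace_mul_cycle, hQ2, hQρtr]
    have ht1 : t ≤ 1 := by linarith
    have hT3 : ‖Matrix.trace (C * (P * ρ * Q))‖ ≤ Real.sqrt ε := by
      have := my_abs_trace_le (R * P * C) (R * Q)
      rw [← h3form, e5, e6] at this
      simp only [Complex.ofReal_re] at this
      refine this.trans ?_
      calc Real.sqrt t * Real.sqrt (1 - t) ≤ 1 * Real.sqrt ε :=
            mul_le_mul (Real.sqrt_le_one.mpr ht1) (Real.sqrt_le_sqrt het)
              (Real.sqrt_nonneg _) zero_le_one
        _ = Real.sqrt ε := one_mul _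
    -- combine
    have hnorm : ‖Matrix.trace (C * D)‖ ≤ (1 - t) + Real.sqrt ε + Real.sqrt ε := by
      rw [htrace]
      calc ‖((1 - t : ℝ) : ℂ) * Matrix.trace (C * w)
            - Matrix.trace (C * (Q * ρ)) - Matrix.trace (C * (P * ρ * Q))‖
          ≤ ‖((1 - t : ℝ) : ℂ) * Matrix.trace (C * w) - Matrix.trace (C * (Q * ρ))‖
            + ‖Matrix.trace (C * (P * ρ * Q))‖ := norm_sub_le _ _
        _ ≤ ‖((1 - t : ℝ) : ℂ) * Matrix.trace (C * w)‖ + ‖Matrix.trace (C * (Q * ρ))‖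
            + ‖Matrix.trace (C * (P * ρ * Q))‖ := by
              gcongr
              exact norm_sub_le _ _
        _ ≤ (1 - t) * 1 + Real.sqrt ε + Real.sqrt ε := by
              refine add_le_add (add_le_add ?_ hT2) hT3
              rw [norm_mul, Complex.norm_real, Real.norm_eq_abs, abs_of_nonneg hQρ0]
              exact mul_le_mul_of_nonneg_left hT1 hQρ0
        _ = (1 - t) + Real.sqrt ε + Real.sqrt ε := by ring
    calc traceNorm D = (Matrix.trace (C * D)).re := hTN
      _ ≤ ‖Matrix.trace (C * D)‖ := Complex.re_le_norm _
      _ ≤ (1 - t) + Real.sqrt ε + Real.sqrt ε := hnorm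
      _ ≤ 2 * Real.sqrt ε + ε := by linarith
  · -- second part
    intro L hL
    set x : ℝ := (2 : ℝ) ^ (-(L : ℝ) / 2) with hxdef
    have hx0 : 0 ≤ x := (Real.rpow_pos_of_pos two_pos _).le
    have hLnn : (0 : ℝ) ≤ (L : ℝ) := Nat.cast_nonneg _
    have hx1 : x ≤ 1 :=
      Real.rpow_le_one_of_one_le_of_nonpos one_le_two (by linarith)
    have hxx : x * x = (2 : ℝ) ^ (-(L : ℝ)) := by
      rw [hxdef, ← Real.rpow_add two_pos]
      congr 1
      ring
    have hsq : Real.sqrt ε = x := by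
      rw [hL, Real.sqrt_eq_rpow, ← Real.rpow_mul (by norm_num : (0:ℝ) ≤ 2), hxdef]
      congr 1
      ring
    have hε' : ε = x * x := by rw [hL, hxx]
    have hrhs : (2 : ℝ) ^ (2 - (L : ℝ) / 2) = 4 * x := by
      have h4 : (2 : ℝ) ^ (2 : ℝ) = 4 := by
        rw [show (2 : ℝ) = ((2 : ℕ) : ℝ) from by norm_num, Real.rpow_natCast]
        norm_num
      rw [show (2 - (L : ℝ) / 2) = 2 + (-(L : ℝ) / 2) from by ring,
        Real.rpow_add two_pos, h4, hxdef]
    rw [hsq, hε', hrhs]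
    nlinarith [hx0, hx1]
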